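/- arXiv:2601.10755 — 5 statements merged into one kernel-verified Lean document; each statement's English description precedes it below -/
import Mathlib

section
/- The crossbridge Q_XY meets the octacross O exactly in two crosses: O ∩ Q_XY = C₁ ∪ C₂, where C₁ = {(1,t,0) : |t| ≤ 1/3} ∪ {(1,0,t) : |t| ≤ 1/3} and C₂ = {(t,−1,0) : |t| ≤ 1/3} ∪ {(0,−1,t) : |t| ≤ 1/3}. -/
/-- The octagon `O_XY = ([-1,1]² \ ⋃ D°_{2/3}(±1,±1)) × {0} ⊂ ℝ³`. -/
def OXY : Set (ℝ × ℝ × ℝ) :=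
  {v | |v.1| ≤ 1 ∧ |v.2.1| ≤ 1 ∧ v.2.2 = 0 ∧
       (2/3)^2 ≤ (v.1 - 1)^2 + (v.2.1 - 1)^2 ∧
       (2/3)^2 ≤ (v.1 - 1)^2 + (v.2.1 + 1)^2 ∧
       (2/3)^2 ≤ (v.1 + 1)^2 + (v.2.1 - 1)^2 ∧
       (2/3)^2 ≤ (v.1 + 1)^2 + (v.2.1 + 1)^2}

/-- The cyclic coordinate map `c(x,y,z) = (z,x,y)`. -/
def cyc (v : ℝ × ℝ × ℝ) : ℝ × ℝ × ℝ := (v.2.2, v.1, v.2.1)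

def OYZ : Set (ℝ × ℝ × ℝ) := cyc '' OXY

def OZX : Set (ℝ × ℝ × ℝ) := cyc '' OYZ

/-- The octacross `O = O_XY ∪ O_YZ ∪ O_ZX`. -/
def octacross : Set (ℝ × ℝ × ℝ) := OXY ∪ OYZ ∪ OZX

/-- The annulus `A_XY = (D_{4/3}(1,-1) \ D°_{2/3}(1,-1)) × {0} ⊂ ℝ³`. -/
def AXY : Set (ℝ × ℝ × ℝ) :=
  {v | (2/3)^2 ≤ (v.1 - 1)^2 + (v.2.1 + 1)^2 ∧
       (v.1 - 1)^2 + (v.2.1 + 1)^2 ≤ (4/3)^2 ∧ v.2.2 = 0}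

/-- The cylinder `B_XY = ∂D_1(1,-1) × [-1/3, 1/3]`. -/
def BXY : Set (ℝ × ℝ × ℝ) :=
  {v | (v.1 - 1)^2 + (v.2.1 + 1)^2 = 1 ∧ |v.2.2| ≤ 1/3}

/-- The crossbridge `Q_XY = {(x,y,t) ∈ A_XY ∪ B_XY : max(|x|,|y|) ≥ 1}`. -/
def QXY : Set (ℝ × ℝ × ℝ) :=
  {v ∈ AXY ∪ BXY | 1 ≤ max |v.1| |v.2.1|}

/-- The cross `C₁ = {(1,t,0) : |t| ≤ 1/3} ∪ {(1,0,t) : |t| ≤ 1/3}`. -/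
def cross₁ : Set (ℝ × ℝ × ℝ) :=
  {v | ∃ t : ℝ, |t| ≤ 1/3 ∧ (v = (1, t, 0) ∨ v = (1, 0, t))}

/-- The cross `C₂ = {(t,-1,0) : |t| ≤ 1/3} ∪ {(0,-1,t) : |t| ≤ 1/3}`. -/
def cross₂ : Set (ℝ × ℝ × ℝ) :=
  {v | ∃ t : ℝ, |t| ≤ 1/3 ∧ (v = (t, -1, 0) ∨ v = (0, -1, t))}

lemma mem_OYZ {v : ℝ × ℝ × ℝ} : v ∈ OYZ ↔ (v.2.1, v.2.2, v.1) ∈ OXY := by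
  constructor
  · rintro ⟨u, hu, rfl⟩
    simpa [cyc] using hu
  · intro h
    exact ⟨(v.2.1, v.2.2, v.1), h, by simp [cyc]⟩

lemma mem_OZX {v : ℝ × ℝ × ℝ} : v ∈ OZX ↔ (v.2.2, v.1, v.2.1) ∈ OXY := by
  constructor
  · rintro ⟨u, hu, rfl⟩
    rw [mem_OYZ] at hu
    simpa [cyc] using hu
  · intro h
    exact ⟨(v.2.1, v.2.2, v.1), mem_OYZ.mpr (by exact h), by simp [cyc]⟩

/-- the crossbridge `Q_XY` meets the octacross `O` exactly in the
two crosses `C₁ ∪ C₂`. -/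
theorem octacross_inter_crossbridge :
    octacross ∩ QXY = cross₁ ∪ cross₂ := by
  ext v
  obtain ⟨x, y, z⟩ := v
  simp only [octacross, Set.mem_inter_iff, Set.mem_union, mem_OYZ, mem_OZX,
    OXY, QXY, AXY, BXY, cross₁, cross₂, Set.mem_setOf_eq, Prod.mk.injEq]
  constructor
  · rintro ⟨hO, hAB, hmax⟩
    rcases hO with (⟨hx1, hy1, hz0, c1, c2, c3, c4⟩ | ⟨hy1, hz1, hx0, c1, c2, c3, c4⟩) |
      ⟨hz1, hx1, hy0, c1, c2, c3, c4⟩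
    · -- v ∈ OXY, z = 0
      subst hz0
      have hr : (2/3)^2 ≤ (x-1)^2 + (y+1)^2 ∧ (x-1)^2 + (y+1)^2 ≤ (4/3)^2 := by
        rcases hAB with ⟨h1, h2, _⟩ | ⟨h1, _⟩
        · exact ⟨h1, h2⟩
        · rw [h1]; norm_num
      obtain ⟨hr1, hr2⟩ := hr
      rw [abs_le] at hx1 hy1
      rcases le_max_iff.mp hmax with h | h
      · rcases le_abs.mp h with h | h
        · have hx : x = 1 := le_antisymm hx1.2 h
          subst hx
          exact Or.inl ⟨y, abs_le.mpr ⟨by nlinarith, by nlinarith⟩, Or.inl ⟨rfl, rfl, rfl⟩⟩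
        · exfalso; nlinarith [sq_nonneg (x+1), sq_nonneg (y+1)]
      · rcases le_abs.mp h with h | h
        · exfalso; nlinarith [sq_nonneg (y-1), sq_nonneg (x-1)]
        · have hy : y = -1 := le_antisymm (by linarith) hy1.1
          subst hy
          exact Or.inr ⟨x, abs_le.mpr ⟨by nlinarith, by nlinarith⟩, Or.inl ⟨rfl, rfl, rfl⟩⟩
    · -- v ∈ OYZ, x = 0
      subst hx0
      rw [abs_le] at hy1
      rcases le_max_iff.mp hmax with h | h
      · exact absurd h (by norm_num)
      · rcases le_abs.mp h with h | h
        · have hy : y = 1 := le_antisymm hy1.2 h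
          subst hy
          exfalso
          rcases hAB with ⟨_, h2, _⟩ | ⟨h1, _⟩
          · norm_num at h2
          · norm_num at h1
        · have hy : y = -1 := le_antisymm (by linarith) hy1.1
          subst hy
          rcases hAB with ⟨_, _, hz⟩ | ⟨_, hz⟩
          · subst hz
            exact Or.inr ⟨0, by norm_num, Or.inr ⟨rfl, rfl, rfl⟩⟩
          · exact Or.inr ⟨z, hz, Or.inr ⟨rfl, rfl, rfl⟩⟩
    · -- v ∈ OZX, y = 0
      subst hy0
      rw [abs_le] at hx1
      rcases le_max_iff.mp hmax with h | h
      · rcases le_abs.mp h with h | h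
        · have hx : x = 1 := le_antisymm hx1.2 h
          subst hx
          rcases hAB with ⟨_, _, hz⟩ | ⟨_, hz⟩
          · subst hz
            exact Or.inl ⟨0, by norm_num, Or.inr ⟨rfl, rfl, rfl⟩⟩
          · exact Or.inl ⟨z, hz, Or.inr ⟨rfl, rfl, rfl⟩⟩
        · have hx : x = -1 := le_antisymm (by linarith) hx1.1
          subst hx
          exfalso
          rcases hAB with ⟨_, h2, _⟩ | ⟨h1, _⟩
          · norm_num at h2
          · norm_num at h1
      · exact absurd h (by norm_num)
  · rintro (⟨t, ht, (⟨rfl, rfl, rfl⟩ | ⟨rfl, rfl, rfl⟩)⟩ |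
      ⟨t, ht, (⟨rfl, rfl, rfl⟩ | ⟨rfl, rfl, rfl⟩)⟩)
    · -- (1, t, 0)
      rw [abs_le] at ht
      refine ⟨Or.inl (Or.inl ⟨by norm_num, abs_le.mpr ⟨by linarith, by linarith⟩, rfl,
        by nlinarith, by nlinarith, by nlinarith, by nlinarith⟩),
        Or.inl ⟨by nlinarith, by nlinarith, rfl⟩,
        le_max_iff.mpr (Or.inl (by norm_num))⟩
    · -- (1, 0, t)
      rw [abs_le] at ht
      refine ⟨Or.inr (⟨abs_le.mpr ⟨by linarith, by linarith⟩, by norm_num, rfl,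
        by nlinarith, by nlinarith, by nlinarith, by nlinarith⟩),
        Or.inr ⟨by norm_num, abs_le.mpr ⟨by linarith, by linarith⟩⟩,
        le_max_iff.mpr (Or.inl (by norm_num))⟩
    · -- (t, -1, 0)
      rw [abs_le] at ht
      refine ⟨Or.inl (Or.inl ⟨abs_le.mpr ⟨by linarith, by linarith⟩, by norm_num, rfl,
        by nlinarith, by nlinarith, by nlinarith, by nlinarith⟩),
        Or.inl ⟨by nlinarith, by nlinarith, rfl⟩,
        le_max_iff.mpr (Or.inr (by norm_num))⟩
    · -- (0, -1, t)
      rw [abs_le] at ht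
      refine ⟨Or.inl (Or.inr ⟨by norm_num, abs_le.mpr ⟨by linarith, by linarith⟩, rfl,
        by nlinarith, by nlinarith, by nlinarith, by nlinarith⟩),
        Or.inr ⟨by norm_num, abs_le.mpr ⟨by linarith, by linarith⟩⟩,
        le_max_iff.mpr (Or.inr (by norm_num))⟩
end

section
/- The immersed Möbius band M is invariant under both the order-3 rotation c(x,y,z) = (z,x,y) and the order-2 rotation τ(x,y,z) = (−y,−x,−z); that is, c(M) = M and τ(M) = M (so M is invariant under a rotation group of order 6). -/
def QYZ : Set (ℝ × ℝ × ℝ) := cyc '' QXY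

def QZX : Set (ℝ × ℝ × ℝ) := cyc '' QYZ

/-- The disk `D_XY = D_{2/3}(1,-1) × {0}`. -/
def DXY : Set (ℝ × ℝ × ℝ) :=
  {v | (v.1 - 1)^2 + (v.2.1 + 1)^2 ≤ (2/3)^2 ∧ v.2.2 = 0}

def DYZ : Set (ℝ × ℝ × ℝ) := cyc '' DXY

def DZX : Set (ℝ × ℝ × ℝ) := cyc '' DYZ

/-- The immersed Moebius band `M`. -/
def mob : Set (ℝ × ℝ × ℝ) := octacross ∪ QXY ∪ QYZ ∪ QZX ∪ DXY ∪ DYZ ∪ DZX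

/-- The order-2 rotation `τ(x,y,z) = (-y,-x,-z)`. -/
def τ (v : ℝ × ℝ × ℝ) : ℝ × ℝ × ℝ := (-v.2.1, -v.1, -v.2.2)

lemma tau_invol : Function.Involutive τ := by
  intro v; simp [τ]

lemma image_cyc3 (s : Set (ℝ × ℝ × ℝ)) : cyc '' (cyc '' (cyc '' s)) = s := by
  rw [Set.image_image, Set.image_image]
  have : (fun v => cyc (cyc (cyc v))) = (id : ℝ × ℝ × ℝ → ℝ × ℝ × ℝ) := by
    funext v; simp [cyc]
  rw [this, Set.image_id]

lemma tau_cyc_image (s : Set (ℝ × ℝ × ℝ)) :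
    τ '' (cyc '' s) = cyc '' (cyc '' (τ '' s)) := by
  have h : τ ∘ cyc = cyc ∘ (cyc ∘ τ) := by funext v; simp [τ, cyc]
  rw [← Set.image_comp, h, Set.image_comp, Set.image_comp]

lemma tau_image_eq {s : Set (ℝ × ℝ × ℝ)} (h : ∀ v ∈ s, τ v ∈ s) : τ '' s = s := by
  refine Set.Subset.antisymm ?_ ?_
  · rintro _ ⟨v, hv, rfl⟩; exact h v hv
  · intro v hv; exact ⟨τ v, h v hv, tau_invol v⟩

lemma tau_OXY : τ '' OXY = OXY := by
  refine tau_image_eq ?_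
  rintro v ⟨h1, h2, h3, h4, h5, h6, h7⟩
  refine ⟨?_, ?_, ?_, ?_, ?_, ?_, ?_⟩ <;>
    simp only [τ, abs_neg, neg_eq_zero] <;>
    first
      | exact h2 | exact h1 | exact h3 | nlinarith [h4, h5, h6, h7]

lemma tau_QXY : τ '' QXY = QXY := by
  refine tau_image_eq ?_
  rintro v ⟨hab, hm⟩
  constructor
  · rcases hab with ⟨ha1, ha2, ha3⟩ | ⟨hb1, hb2⟩
    · left
      refine ⟨?_, ?_, ?_⟩ <;> simp only [τ, neg_eq_zero] <;>
        first | exact ha3 | nlinarith [ha1, ha2]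
    · right
      refine ⟨?_, ?_⟩ <;> simp only [τ, abs_neg] <;>
        first | exact hb2 | nlinarith [hb1]
  · simp only [τ, abs_neg]
    rw [max_comm]; exact hm

lemma tau_DXY : τ '' DXY = DXY := by
  refine tau_image_eq ?_
  rintro v ⟨h1, h2⟩
  refine ⟨?_, ?_⟩ <;> simp only [τ, neg_eq_zero] <;>
    first | exact h2 | nlinarith [h1]

/-- the immersed Moebius band `M` is invariant under the order-3
rotation `c` and the order-2 rotation `τ`, hence under a rotation group of
order 6. -/
theorem mob_symmetry : cyc '' mob = mob ∧ τ '' mob = mob := by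
  have hcO : cyc '' OZX = OXY := image_cyc3 OXY
  have hcQ : cyc '' QZX = QXY := image_cyc3 QXY
  have hcD : cyc '' DZX = DXY := image_cyc3 DXY
  have htOYZ : τ '' OYZ = OZX := by
    rw [OYZ, tau_cyc_image, tau_OXY]; rfl
  have htOZX : τ '' OZX = OYZ := by
    rw [OZX, tau_cyc_image, htOYZ, OZX, image_cyc3]
  have htQYZ : τ '' QYZ = QZX := by
    rw [QYZ, tau_cyc_image, tau_QXY]; rfl
  have htQZX : τ '' QZX = QYZ := by
    rw [QZX, tau_cyc_image, htQYZ, QZX, image_cyc3]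
  have htDYZ : τ '' DYZ = DZX := by
    rw [DYZ, tau_cyc_image, tau_DXY]; rfl
  have htDZX : τ '' DZX = DYZ := by
    rw [DZX, tau_cyc_image, htDYZ, DZX, image_cyc3]
  constructor
  · rw [mob, octacross]
    simp only [Set.image_union, hcO, hcQ, hcD]
    rw [show cyc '' OXY = OYZ from rfl, show cyc '' OYZ = OZX from rfl,
        show cyc '' QXY = QYZ from rfl, show cyc '' QYZ = QZX from rfl,
        show cyc '' DXY = DYZ from rfl, show cyc '' DYZ = DZX from rfl]
    ext v; simp only [Set.mem_union]; tauto
  · rw [mob, octacross]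
    simp only [Set.image_union, tau_OXY, tau_QXY, tau_DXY,
      htOYZ, htOZX, htQYZ, htQZX, htDYZ, htDZX]
    ext v; simp only [Set.mem_union]; tauto
end

section
/- The planar piece M_XY = O_XY ∪ {(x,y,z) ∈ A_XY : max(|x|,|y|) ≥ 1} ∪ D_XY is a topological rectangle: it is homeomorphic to the closed unit disk in ℝ². -/
/-- The planar piece `M_XY`: the intersection of the Moebius band `M` with the
`XY`-plane. -/
def MXY : Set (ℝ × ℝ × ℝ) :=
  OXY ∪ {v ∈ AXY | 1 ≤ max |v.1| |v.2.1|} ∪ DXY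

open Metric Set


variable {E : Type*} [NormedAddCommGroup E] [NormedSpace ℝ E]

theorem starbody_homeo {S : Set E} (hSc : IsCompact S) {ε : ℝ} (hε : 0 < ε)
    (hne : S.Nonempty)
    (hker : ∀ x ∈ S, ∀ y : E, ‖y‖ ≤ ε → segment ℝ y x ⊆ S) :
    Nonempty (S ≃ₜ (Metric.closedBall (0 : E) 1)) := by
  classical
  -- the small ball is inside S
  have hball : ∀ y : E, ‖y‖ ≤ ε → y ∈ S := fun y hy =>
    hker _ hne.choose_spec y hy (left_mem_segment ℝ y _)
  have h0S : (0 : E) ∈ S := hball 0 (by simp [hε.le])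
  -- a bound for S
  obtain ⟨R₀, hR₀⟩ := hSc.isBounded.subset_closedBall 0
  set R : ℝ := max R₀ ε with hRdef
  have hRS : ∀ x ∈ S, ‖x‖ ≤ R := fun x hx => by
    have := hR₀ hx; rw [mem_closedBall, dist_zero_right] at this
    exact this.trans (le_max_left _ _)
  have hεR : ε ≤ R := le_max_right _ _
  have hR0 : 0 < R := lt_of_lt_of_le hε hεR
  -- the radial function
  set T : E → Set ℝ := fun u => {t : ℝ | 0 ≤ t ∧ t • u ∈ S} with hTdef
  set ρ : E → ℝ := fun u => sSup (T u) with hρdef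
  have hT0 : ∀ u : E, 0 ∈ T u := fun u => ⟨le_rfl, by simpa using h0S⟩
  have hTbdd : ∀ u : E, ‖u‖ = 1 → BddAbove (T u) := by
    intro u hu
    refine ⟨R, fun t ht => ?_⟩
    have := hRS _ ht.2
    rwa [norm_smul, hu, mul_one, Real.norm_eq_abs, abs_of_nonneg ht.1] at this
  have hTcl : ∀ u : E, IsClosed (T u) := by
    intro u
    have : T u = Ici (0:ℝ) ∩ (fun t : ℝ => t • u) ⁻¹' S := rfl
    rw [this]
    exact isClosed_Ici.inter (hSc.isClosed.preimage (continuous_id.smul continuous_const))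
  have hρmem : ∀ u : E, ‖u‖ = 1 → ρ u ∈ T u := fun u hu =>
    (hTcl u).csSup_mem ⟨0, hT0 u⟩ (hTbdd u hu)
  have hρε : ∀ u : E, ‖u‖ = 1 → ε ≤ ρ u := by
    intro u hu
    refine le_csSup (hTbdd u hu) ⟨hε.le, hball _ ?_⟩
    rw [norm_smul, hu, mul_one, Real.norm_eq_abs, abs_of_nonneg hε.le]
  have hρR : ∀ u : E, ‖u‖ = 1 → ρ u ≤ R := by
    intro u hu
    refine csSup_le ⟨0, hT0 u⟩ (fun t ht => ?_)
    have := hRS _ ht.2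
    rwa [norm_smul, hu, mul_one, Real.norm_eq_abs, abs_of_nonneg ht.1] at this
  have hρ0 : ∀ u : E, ‖u‖ = 1 → 0 < ρ u := fun u hu => lt_of_lt_of_le hε (hρε u hu)
  have hseg : ∀ u : E, ‖u‖ = 1 → ∀ t : ℝ, 0 ≤ t → t ≤ ρ u → t • u ∈ S := by
    intro u hu t ht0 ht1
    have hmem : (ρ u) • u ∈ S := (hρmem u hu).2
    have : t • u ∈ segment ℝ (0 : E) ((ρ u) • u) := by
      rw [segment_eq_image]
      refine ⟨t / ρ u, ⟨div_nonneg ht0 (hρ0 u hu).le, by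
        rw [div_le_one (hρ0 u hu)]; exact ht1⟩, ?_⟩
      simp [smul_smul, div_mul_cancel₀ _ (hρ0 u hu).ne']
    exact hker _ hmem 0 (by simp [hε.le]) this
  -- the Lipschitz-type bound for ρ on the unit sphere
  have hlip : ∀ u v : E, ‖u‖ = 1 → ‖v‖ = 1 → ρ v ≤ ρ u + (R^2/ε) * ‖v - u‖ := by
    intro u v hu hv
    rcases eq_or_ne v u with rfl | hvu
    · simp
    set t : ℝ := ρ v with htdef
    set d : ℝ := ‖v - u‖ with hddef
    have hd0 : 0 < d := by
      rw [hddef, norm_pos_iff, sub_ne_zero]; exact hvu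
    have ht0 : 0 < t := hρ0 v hv
    have hden : 0 < ε + t * d := by positivity
    set lam : ℝ := ε / (ε + t * d) with hlamdef
    have hlam0 : 0 < lam := by positivity
    have hlam1 : lam ≤ 1 := by
      rw [hlamdef, div_le_one hden]; nlinarith
    set y : E := (ε / d) • (u - v) with hydef
    have hyn : ‖y‖ = ε := by
      rw [hydef, norm_smul, Real.norm_eq_abs, abs_of_pos (by positivity), ← norm_neg (u - v),
        neg_sub, ← hddef, div_mul_cancel₀ _ hd0.ne']
    have hcoef : (1 - lam) * (ε / d) = lam * t := by
      rw [hlamdef]; field_simp; ring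
    have hmem : (lam * t) • u ∈ S := by
      have hseg' : (lam * t) • u ∈ segment ℝ y (t • v) := by
        refine ⟨1 - lam, lam, by linarith, hlam0.le, by ring, ?_⟩
        rw [hydef, smul_smul, hcoef, smul_smul, smul_sub, ← smul_sub]
        rw [← smul_add, sub_add_cancel]
      exact hker _ (hρmem v hv).2 y (le_of_eq hyn) hseg'
    have hle : lam * t ≤ ρ u := le_csSup (hTbdd u hu) ⟨by positivity, hmem⟩
    have h1 : ε * t ≤ ρ u * (ε + t * d) := by
      rw [hlamdef] at hle
      rw [div_mul_eq_mul_div, div_le_iff₀ hden] at hle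
      linarith [hle]
    have htR : t ≤ R := hρR v hv
    have hρu0 : 0 ≤ ρ u := (hρ0 u hu).le
    have hρuR : ρ u ≤ R := hρR u hu
    have hprod : ρ u * t ≤ R * R := mul_le_mul hρuR htR ht0.le hR0.le
    have key : (t - ρ u) * ε ≤ R^2 * d := by
      nlinarith [mul_le_mul_of_nonneg_right hprod hd0.le]
    have h2 : t - ρ u ≤ R^2/ε * d := by
      rw [div_mul_eq_mul_div, le_div_iff₀ hε]; linarith
    linarith
  -- the normalization map and the radial compression map
  set n : E → E := fun x => ‖x‖⁻¹ • x with hndef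
  have hnu : ∀ x : E, x ≠ 0 → ‖n x‖ = 1 := by
    intro x hx
    rw [hndef]; simp only
    rw [norm_smul, norm_inv, norm_norm, inv_mul_cancel₀ (norm_ne_zero_iff.2 hx)]
  have hnx : ∀ x : E, x ≠ 0 → ‖x‖ • n x = x := by
    intro x hx
    rw [hndef]; simp only
    rw [smul_smul, mul_inv_cancel₀ (norm_ne_zero_iff.2 hx), one_smul]
  set Φ : E → E := fun x => if x = 0 then 0 else (ρ (n x))⁻¹ • x with hΦdef
  have hΦ0 : Φ 0 = 0 := by rw [hΦdef]; simp
  have hΦne : ∀ x : E, x ≠ 0 → Φ x = (ρ (n x))⁻¹ • x := by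
    intro x hx; rw [hΦdef]; simp [hx]
  -- continuity of ρ ∘ n away from 0
  have hρn_cont : ∀ x₀ : E, x₀ ≠ 0 → ContinuousAt (fun x => ρ (n x)) x₀ := by
    intro x₀ hx₀
    have hn_cont : ContinuousAt n x₀ := by
      exact ((continuous_norm.continuousAt).inv₀ (norm_ne_zero_iff.2 hx₀)).smul
        continuousAt_id
    rw [Metric.continuousAt_iff]
    intro e he
    have hK : 0 < R^2/ε := by positivity
    obtain ⟨δ₁, hδ₁0, hδ₁⟩ := Metric.continuousAt_iff.mp hn_cont (e / (R^2/ε)) (by positivity)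
    refine ⟨min δ₁ ‖x₀‖, lt_min hδ₁0 (norm_pos_iff.2 hx₀), ?_⟩
    intro x hxd
    have hxne : x ≠ 0 := by
      intro h
      rw [h, dist_zero_left] at hxd
      exact absurd (lt_of_lt_of_le hxd (min_le_right _ _)) (lt_irrefl _)
    have hd1 : dist (n x) (n x₀) < e / (R^2/ε) := hδ₁ (lt_of_lt_of_le hxd (min_le_left _ _))
    have habs : |ρ (n x) - ρ (n x₀)| ≤ R^2/ε * dist (n x) (n x₀) := by
      rw [abs_sub_le_iff]
      constructor
      · have := hlip (n x₀) (n x) (hnu _ hx₀) (hnu _ hxne)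
        rw [← dist_eq_norm] at this; linarith
      · have := hlip (n x) (n x₀) (hnu _ hxne) (hnu _ hx₀)
        rw [← dist_eq_norm, dist_comm] at this; linarith
    rw [Real.dist_eq]
    calc |ρ (n x) - ρ (n x₀)| ≤ R^2/ε * dist (n x) (n x₀) := habs
      _ < R^2/ε * (e / (R^2/ε)) := by
          exact mul_lt_mul_of_pos_left hd1 hK
      _ = e := by field_simp
  -- continuity of Φ
  have hΦcont : Continuous Φ := by
    rw [continuous_iff_continuousAt]
    intro x₀
    rcases eq_or_ne x₀ 0 with rfl | hx₀
    · have hb : ∀ x : E, ‖Φ x‖ ≤ ε⁻¹ * ‖x‖ := by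
        intro x
        rcases eq_or_ne x 0 with rfl | hx
        · simp [hΦ0]
        · rw [hΦne x hx, norm_smul, norm_inv, Real.norm_eq_abs,
            abs_of_pos (hρ0 _ (hnu _ hx))]
          have h1 : ε ≤ ρ (n x) := hρε _ (hnu _ hx)
          have := inv_anti₀ hε h1
          exact mul_le_mul_of_nonneg_right this (norm_nonneg x)
      have htends : Filter.Tendsto (fun x : E => ε⁻¹ * ‖x‖) (nhds 0) (nhds 0) := by
        have : Continuous (fun x : E => ε⁻¹ * ‖x‖) := continuous_const.mul continuous_norm
        have h := this.tendsto 0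
        simpa using h
      have : Filter.Tendsto Φ (nhds 0) (nhds 0) := squeeze_zero_norm hb htends
      rw [ContinuousAt, hΦ0]; exact this
    · have heq : ∀ᶠ x in nhds x₀, Φ x = (ρ (n x))⁻¹ • x := by
        filter_upwards [isOpen_compl_singleton.mem_nhds (by simpa using hx₀)] with x hx
        exact hΦne x (by simpa using hx)
      have hc : ContinuousAt (fun x => (ρ (n x))⁻¹ • x) x₀ :=
        ((hρn_cont x₀ hx₀).inv₀ (hρ0 _ (hnu _ hx₀)).ne').smul continuousAt_id
      exact hc.congr (Filter.EventuallyEq.symm heq)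
  -- Φ maps S into the closed unit ball
  have hmaps : ∀ x ∈ S, Φ x ∈ Metric.closedBall (0 : E) 1 := by
    intro x hx
    rcases eq_or_ne x 0 with rfl | hxne
    · simp [hΦ0]
    · rw [mem_closedBall, dist_zero_right, hΦne x hxne, norm_smul, norm_inv,
        Real.norm_eq_abs, abs_of_pos (hρ0 _ (hnu _ hxne))]
      have hTx : ‖x‖ ∈ T (n x) := ⟨norm_nonneg x, by rw [hnx x hxne]; exact hx⟩
      have h1 : ‖x‖ ≤ ρ (n x) := le_csSup (hTbdd _ (hnu _ hxne)) hTx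
      rw [inv_mul_le_iff₀ (hρ0 _ (hnu _ hxne)), mul_one]
      exact h1
  -- injectivity on S
  have hinj : ∀ x ∈ S, ∀ x' ∈ S, Φ x = Φ x' → x = x' := by
    intro x hx x' hx' heq
    rcases eq_or_ne x 0 with rfl | hxne
    · rcases eq_or_ne x' 0 with rfl | hxne'
      · rfl
      · exfalso
        rw [hΦ0, hΦne x' hxne'] at heq
        rcases smul_eq_zero.mp heq.symm with h | h
        · exact (hρ0 _ (hnu _ hxne')).ne' (inv_eq_zero.mp h)
        · exact hxne' h
    · rcases eq_or_ne x' 0 with rfl | hxne'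
      · exfalso
        rw [hΦ0, hΦne x hxne] at heq
        rcases smul_eq_zero.mp heq with h | h
        · exact (hρ0 _ (hnu _ hxne)).ne' (inv_eq_zero.mp h)
        · exact hxne h
      · rw [hΦne x hxne, hΦne x' hxne'] at heq
        set c : ℝ := ρ (n x') * (ρ (n x))⁻¹ with hcdef
        have hc0 : 0 < c :=
          mul_pos (hρ0 _ (hnu _ hxne')) (inv_pos.2 (hρ0 _ (hnu _ hxne)))
        have hx'c : x' = c • x := by
          have := congrArg (fun z => (ρ (n x')) • z) heq
          rw [smul_smul, smul_smul, mul_inv_cancel₀ (hρ0 _ (hnu _ hxne')).ne',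
            one_smul] at this
          rw [← this, hcdef, mul_smul]
        have hnn : n x' = n x := by
          have hxn0 : ‖x‖ ≠ 0 := norm_ne_zero_iff.2 hxne
          rw [hx'c]
          show ‖c • x‖⁻¹ • (c • x) = ‖x‖⁻¹ • x
          rw [norm_smul, Real.norm_eq_abs, abs_of_pos hc0, smul_smul, mul_inv]
          congr 1
          field_simp
        have hceq : c = 1 := by
          rw [hcdef, hnn, mul_inv_cancel₀ (hρ0 _ (hnu _ hxne)).ne']
        rw [hx'c, hceq, one_smul]
  -- surjectivity onto the closed ball
  have hsurj : ∀ v ∈ Metric.closedBall (0 : E) 1, ∃ x ∈ S, Φ x = v := by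
    intro v hv
    rcases eq_or_ne v 0 with rfl | hvne
    · exact ⟨0, h0S, hΦ0⟩
    · rw [mem_closedBall, dist_zero_right] at hv
      set u : E := n v with hudef
      have hu1 : ‖u‖ = 1 := hnu v hvne
      set x : E := (‖v‖ * ρ u) • u with hxdef
      have hs0 : 0 < ‖v‖ * ρ u := mul_pos (norm_pos_iff.2 hvne) (hρ0 u hu1)
      have hxS : x ∈ S := hseg u hu1 _ hs0.le (by
        nlinarith [hρ0 u hu1])
      have hxne : x ≠ 0 := by
        rw [hxdef]
        intro h
        rcases smul_eq_zero.mp h with h | h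
        · exact absurd h hs0.ne'
        · rw [h] at hu1; simp at hu1
      have hnxu : n x = u := by
        rw [hndef]; simp only
        rw [hxdef, norm_smul, Real.norm_eq_abs, abs_of_pos hs0, hu1, mul_one, smul_smul,
          inv_mul_cancel₀ hs0.ne', one_smul]
      refine ⟨x, hxS, ?_⟩
      rw [hΦne x hxne, hnxu, hxdef, smul_smul]
      have : (ρ u)⁻¹ * (‖v‖ * ρ u) = ‖v‖ := by
        rw [mul_comm, mul_assoc, mul_inv_cancel₀ (hρ0 u hu1).ne', mul_one]
      rw [this, hudef, hnx v hvne]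
  -- assemble the homeomorphism
  haveI : CompactSpace S := isCompact_iff_compactSpace.mp hSc
  set f : S → (Metric.closedBall (0 : E) 1 : Set E) :=
    fun x => ⟨Φ x, hmaps x x.2⟩ with hfdef
  have hfbij : Function.Bijective f := by
    constructor
    · intro a b hab
      exact Subtype.ext (hinj a a.2 b b.2 (congrArg Subtype.val hab))
    · intro w
      obtain ⟨x, hxS, hx⟩ := hsurj w w.2
      exact ⟨⟨x, hxS⟩, Subtype.ext hx⟩
  have hfc : Continuous f := (hΦcont.comp continuous_subtype_val).subtype_mk _
  exact ⟨Continuous.homeoOfEquivCompactToT2 (f := Equiv.ofBijective f hfbij) hfc⟩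

/-- The planar description of `M_XY`: square minus three open corner disks,
together with the corner bump at `(1,-1)`. -/
def Ppred (x y : ℝ) : Prop :=
  (|x| ≤ 1 ∧ |y| ≤ 1 ∧ (2/3)^2 ≤ (x-1)^2+(y-1)^2 ∧ (2/3)^2 ≤ (x+1)^2+(y-1)^2 ∧
    (2/3)^2 ≤ (x+1)^2+(y+1)^2) ∨
  ((x-1)^2+(y+1)^2 ≤ (4/3)^2 ∧ 1 ≤ max |x| |y|)

lemma MXY_iff (v : ℝ × ℝ × ℝ) : v ∈ MXY ↔ (v.2.2 = 0 ∧ Ppred v.1 v.2.1) := by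
  obtain ⟨x, y, z⟩ := v
  simp only [MXY, OXY, AXY, DXY, Ppred, Set.mem_union, Set.mem_setOf_eq, Set.mem_sep_iff]
  constructor
  · rintro ((⟨h1,h2,h3,h4,h5,h6,h7⟩ | ⟨⟨h4,h5,h3⟩,hm⟩) | ⟨h4,h3⟩)
    · exact ⟨h3, Or.inl ⟨h1, h2, h4, h6, h7⟩⟩
    · exact ⟨h3, Or.inr ⟨h5, hm⟩⟩
    · refine ⟨h3, ?_⟩
      rcases le_or_gt 1 (max |x| |y|) with hm | hm
      · exact Or.inr ⟨by nlinarith, hm⟩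
      · obtain ⟨hx1, hy1⟩ := max_lt_iff.mp hm
        exact Or.inl ⟨hx1.le, hy1.le, by nlinarith [sq_nonneg (x-1), sq_nonneg (y+1)],
          by nlinarith [sq_nonneg (x+1), sq_nonneg (y+1)],
          by nlinarith [sq_nonneg (x+1), sq_nonneg (y+1)]⟩
  · rintro ⟨h3, ⟨h1,h2,h4,h6,h7⟩ | ⟨h4,hm⟩⟩
    · rcases le_or_gt ((2/3:ℝ)^2) ((x-1)^2+(y+1)^2) with h5 | h5
      · exact Or.inl (Or.inl ⟨h1, h2, h3, h4, h5, h6, h7⟩)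
      · exact Or.inr ⟨h5.le, h3⟩
    · rcases le_or_gt ((2/3:ℝ)^2) ((x-1)^2+(y+1)^2) with h5 | h5
      · exact Or.inl (Or.inr ⟨⟨h5, h4, h3⟩, hm⟩)
      · exact Or.inr ⟨h5.le, h3⟩


lemma convub {a p t M : ℝ} (ht0 : 0 ≤ t) (ht1 : t ≤ 1) (ha : a ≤ M) (hp : p ≤ M) :
    (1-t)*a + t*p ≤ M := by
  nlinarith [mul_nonneg (by linarith : (0:ℝ) ≤ 1-t) (by linarith : (0:ℝ) ≤ M - a),
    mul_nonneg ht0 (by linarith : (0:ℝ) ≤ M - p)]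

lemma convlb {a p t m : ℝ} (ht0 : 0 ≤ t) (ht1 : t ≤ 1) (ha : m ≤ a) (hp : m ≤ p) :
    m ≤ (1-t)*a + t*p := by
  nlinarith [mul_nonneg (by linarith : (0:ℝ) ≤ 1-t) (by linarith : (0:ℝ) ≤ a - m),
    mul_nonneg ht0 (by linarith : (0:ℝ) ≤ p - m)]

lemma far1 {q : ℝ} (h : q ≤ 1/5) : (2/3:ℝ)^2 ≤ (q-1)^2 := by nlinarith
lemma far2 {q : ℝ} (h : -(1/5) ≤ q) : (2/3:ℝ)^2 ≤ (q+1)^2 := by nlinarith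
lemma far3 {q : ℝ} (h : q ≤ 1/3) : (2/3:ℝ)^2 ≤ (q-1)^2 := by nlinarith
lemma far4 {q : ℝ} (h : -(1/3) ≤ q) : (2/3:ℝ)^2 ≤ (q+1)^2 := by nlinarith

/-- Monotonicity of the squared distance to a corner along a segment whose far
endpoint is at least `r` away, when the derivative condition holds. -/
lemma segle11 {a b px py t r : ℝ} (ht1 : t ≤ 1)
    (h1 : r ≤ (px-1)^2+(py-1)^2)
    (hd : (px-1)*(px-a)+(py-1)*(py-b) ≤ 0) :
    r ≤ ((1-t)*a+t*px-1)^2 + ((1-t)*b+t*py-1)^2 := by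
  nlinarith [mul_nonneg (sub_nonneg.mpr ht1) (neg_nonneg.mpr hd),
    sq_nonneg ((1-t)*(px-a)), sq_nonneg ((1-t)*(py-b))]

lemma seglem1 {a b px py t r : ℝ} (ht1 : t ≤ 1)
    (h1 : r ≤ (px+1)^2+(py-1)^2)
    (hd : (px+1)*(px-a)+(py-1)*(py-b) ≤ 0) :
    r ≤ ((1-t)*a+t*px+1)^2 + ((1-t)*b+t*py-1)^2 := by
  nlinarith [mul_nonneg (sub_nonneg.mpr ht1) (neg_nonneg.mpr hd),
    sq_nonneg ((1-t)*(px-a)), sq_nonneg ((1-t)*(py-b))]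

lemma seglemm {a b px py t r : ℝ} (ht1 : t ≤ 1)
    (h1 : r ≤ (px+1)^2+(py+1)^2)
    (hd : (px+1)*(px-a)+(py+1)*(py-b) ≤ 0) :
    r ≤ ((1-t)*a+t*px+1)^2 + ((1-t)*b+t*py+1)^2 := by
  nlinarith [mul_nonneg (sub_nonneg.mpr ht1) (neg_nonneg.mpr hd),
    sq_nonneg ((1-t)*(px-a)), sq_nonneg ((1-t)*(py-b))]

set_option maxHeartbeats 1000000 in
lemma PpredA_seg {a b px py t : ℝ}
    (ha1 : -(1/10) ≤ a) (ha2 : a ≤ 1/10) (hb1 : -(1/10) ≤ b) (hb2 : b ≤ 1/10)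
    (hx1 : |px| ≤ 1) (hy1 : |py| ≤ 1)
    (h11 : (2/3)^2 ≤ (px-1)^2+(py-1)^2) (h21 : (2/3)^2 ≤ (px+1)^2+(py-1)^2)
    (h31 : (2/3)^2 ≤ (px+1)^2+(py+1)^2) (ht0 : 0 ≤ t) (ht1 : t ≤ 1) :
    Ppred ((1-t)*a + t*px) ((1-t)*b + t*py) := by
  obtain ⟨hxa, hxb⟩ := abs_le.mp hx1
  obtain ⟨hya, hyb⟩ := abs_le.mp hy1
  left
  refine ⟨abs_le.mpr ⟨convlb ht0 ht1 (by linarith) hxa, convub ht0 ht1 (by linarith) hxb⟩,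
    abs_le.mpr ⟨convlb ht0 ht1 (by linarith) hya, convub ht0 ht1 (by linarith) hyb⟩,
    ?_, ?_, ?_⟩
  · -- corner (1,1)
    rcases le_or_gt px (1/5) with h | h
    · have hq : (1-t)*a + t*px ≤ 1/5 := convub ht0 ht1 (by linarith) h
      linarith [far1 hq, sq_nonneg ((1-t)*b + t*py - 1)]
    · rcases le_or_gt py (1/5) with h' | h'
      · have hq : (1-t)*b + t*py ≤ 1/5 := convub ht0 ht1 (by linarith) h'
        linarith [far1 hq, sq_nonneg ((1-t)*a + t*px - 1)]
      · refine segle11 ht1 h11 ?_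
        have t1 : (px-1)*(px-a) ≤ 0 :=
          mul_nonpos_of_nonpos_of_nonneg (by linarith) (by linarith)
        have t2 : (py-1)*(py-b) ≤ 0 :=
          mul_nonpos_of_nonpos_of_nonneg (by linarith) (by linarith)
        linarith
  · -- corner (-1,1)
    rcases le_or_gt (-(1/5)) px with h | h
    · have hq : -(1/5) ≤ (1-t)*a + t*px := convlb ht0 ht1 (by linarith) h
      linarith [far2 hq, sq_nonneg ((1-t)*b + t*py - 1)]
    · rcases le_or_gt py (1/5) with h' | h'
      · have hq : (1-t)*b + t*py ≤ 1/5 := convub ht0 ht1 (by linarith) h'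
        linarith [far1 hq, sq_nonneg ((1-t)*a + t*px + 1)]
      · refine seglem1 ht1 h21 ?_
        have t1 : (px+1)*(px-a) ≤ 0 :=
          mul_nonpos_of_nonneg_of_nonpos (by linarith) (by linarith)
        have t2 : (py-1)*(py-b) ≤ 0 :=
          mul_nonpos_of_nonpos_of_nonneg (by linarith) (by linarith)
        linarith
  · -- corner (-1,-1)
    rcases le_or_gt (-(1/5)) px with h | h
    · have hq : -(1/5) ≤ (1-t)*a + t*px := convlb ht0 ht1 (by linarith) h
      linarith [far2 hq, sq_nonneg ((1-t)*b + t*py + 1)]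
    · rcases le_or_gt (-(1/5)) py with h' | h'
      · have hq : -(1/5) ≤ (1-t)*b + t*py := convlb ht0 ht1 (by linarith) h'
        linarith [far2 hq, sq_nonneg ((1-t)*a + t*px + 1)]
      · refine seglemm ht1 h31 ?_
        have t1 : (px+1)*(px-a) ≤ 0 :=
          mul_nonpos_of_nonneg_of_nonpos (by linarith) (by linarith)
        have t2 : (py+1)*(py-b) ≤ 0 :=
          mul_nonpos_of_nonneg_of_nonpos (by linarith) (by linarith)
        linarith
set_option maxHeartbeats 1000000 in
lemma PpredB_seg {a b px py t : ℝ}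
    (ha1 : -(1/10) ≤ a) (ha2 : a ≤ 1/10) (hb1 : -(1/10) ≤ b) (hb2 : b ≤ 1/10)
    (hd : (px-1)^2+(py+1)^2 ≤ (4/3)^2) (hm : 1 ≤ max |px| |py|)
    (ht0 : 0 ≤ t) (ht1 : t ≤ 1) :
    Ppred ((1-t)*a + t*px) ((1-t)*b + t*py) := by
  -- the bump near the corner (1,-1)
  have hd' : (px-1)^2 + (py+1)^2 ≤ 16/9 := le_trans hd (by norm_num)
  have hpx1 : -(1/3) ≤ px := by nlinarith [sq_nonneg (px + 1/3), sq_nonneg (py+1)]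
  have hpx2 : px ≤ 7/3 := by nlinarith [sq_nonneg (px - 7/3), sq_nonneg (py+1)]
  have hpy1 : -(7/3) ≤ py := by nlinarith [sq_nonneg (py + 7/3), sq_nonneg (px-1)]
  have hpy2 : py ≤ 1/3 := by nlinarith [sq_nonneg (py - 1/3), sq_nonneg (px-1)]
  have hqxl : -(1/3) ≤ (1-t)*a + t*px := convlb ht0 ht1 (by linarith) hpx1
  have hqyu : (1-t)*b + t*py ≤ 1/3 := convub ht0 ht1 (by linarith) hpy2
  have hqyl : -(7/3) ≤ (1-t)*b + t*py := convlb ht0 ht1 (by linarith) hpy1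
  rcases le_or_gt 1 ((1-t)*a + t*px) with hq1 | hq1
  · -- exits through the edge x = 1
    right
    have hpx : 1 ≤ px := by
      rcases eq_or_lt_of_le ht1 with rfl | htlt
      · linarith
      · by_contra hc
        push_neg at hc
        have e1 : (1-t)*a ≤ (1-t)*(1/10) :=
          mul_le_mul_of_nonneg_left (by linarith) (by linarith)
        have e2 : t*px ≤ t*1 := mul_le_mul_of_nonneg_left hc.le ht0
        linarith
    constructor
    · have e2 : ((1-t)*a + t*px) - 1 ≤ t*(px-1) := by
        have := mul_nonneg (by linarith : (0:ℝ) ≤ 1-t) (by linarith : (0:ℝ) ≤ 1-a)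
        nlinarith
      have hsq1 : (((1-t)*a + t*px) - 1)^2 ≤ (t*(px-1))^2 :=
        sq_le_sq' (by nlinarith [mul_nonneg ht0 (by linarith : (0:ℝ) ≤ px - 1)]) e2
      have hbb1 : (b+1)^2 ≤ (11/10)^2 := sq_le_sq' (by linarith) (by linarith)
      have hwb : (py+1)*(b+1) ≤ (4/3)*(11/10) := by
        rcases le_or_gt 0 (py+1) with h | h
        · exact mul_le_mul (by linarith) (by linarith) (by linarith) (by norm_num)
        · exact le_trans (mul_nonpos_of_nonpos_of_nonneg h.le (by linarith)) (by norm_num)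
      have hqy1 : ((1-t)*b + t*py) + 1 = t*(py+1) + (1-t)*(b+1) := by ring
      nlinarith [hsq1, mul_le_mul_of_nonneg_left hd' (sq_nonneg t),
        mul_le_mul_of_nonneg_left hwb (mul_nonneg ht0 (by linarith : (0:ℝ) ≤ 1-t)),
        mul_le_mul_of_nonneg_left hbb1 (sq_nonneg (1-t)),
        mul_nonneg ht0 (by linarith : (0:ℝ) ≤ 1-t), sq_nonneg (1-t)]
    · exact le_max_iff.mpr (Or.inl (le_abs.mpr (Or.inl hq1)))
  · rcases le_or_gt ((1-t)*b + t*py) (-1) with hq2 | hq2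
    · -- exits through the edge y = -1
      right
      have hpy : py ≤ -1 := by
        rcases eq_or_lt_of_le ht1 with rfl | htlt
        · linarith
        · by_contra hc
          push_neg at hc
          have e1 : (1-t)*(-(1/10)) ≤ (1-t)*b :=
            mul_le_mul_of_nonneg_left (by linarith) (by linarith)
          have e2 : t*(-1) ≤ t*py := mul_le_mul_of_nonneg_left (by linarith) ht0
          linarith
      constructor
      · have e2 : t*(py+1) ≤ ((1-t)*b + t*py) + 1 := by
          have := mul_nonneg (by linarith : (0:ℝ) ≤ 1-t) (by linarith : (0:ℝ) ≤ b+1)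
          nlinarith
        have hsq1 : (((1-t)*b + t*py) + 1)^2 ≤ (t*(py+1))^2 := by
          have hnp : t*(py+1) ≤ 0 := mul_nonpos_of_nonneg_of_nonpos ht0 (by linarith)
          have h2 := sq_le_sq' (by linarith : -(-(t*(py+1))) ≤ ((1-t)*b + t*py) + 1)
            (by linarith : ((1-t)*b + t*py) + 1 ≤ -(t*(py+1)))
          nlinarith [h2]
        have hbb1 : (1-a)^2 ≤ (11/10)^2 := sq_le_sq' (by linarith) (by linarith)
        have hwb : -((px-1)*(1-a)) ≤ (4/3)*(11/10) := by
          rcases le_or_gt 0 (px-1) with h | h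
          · have := mul_nonneg h (by linarith : (0:ℝ) ≤ 1-a)
            nlinarith
          · have h2 : -(px-1)*(1-a) ≤ (4/3)*(11/10) :=
              mul_le_mul (by linarith) (by linarith) (by linarith) (by norm_num)
            nlinarith [h2]
        have hqx1 : ((1-t)*a + t*px) - 1 = t*(px-1) - (1-t)*(1-a) := by ring
        nlinarith [hsq1, mul_le_mul_of_nonneg_left hd' (sq_nonneg t),
          mul_le_mul_of_nonneg_left hwb (mul_nonneg ht0 (by linarith : (0:ℝ) ≤ 1-t)),
          mul_le_mul_of_nonneg_left hbb1 (sq_nonneg (1-t)),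
          mul_nonneg ht0 (by linarith : (0:ℝ) ≤ 1-t), sq_nonneg (1-t)]
      · exact le_max_iff.mpr (Or.inr (le_abs.mpr (Or.inr (by linarith))))
    · -- stays inside the square
      left
      refine ⟨abs_le.mpr ⟨by linarith, hq1.le⟩, abs_le.mpr ⟨by linarith, by linarith⟩,
        ?_, ?_, ?_⟩
      · linarith [far3 hqyu, sq_nonneg ((1-t)*a + t*px - 1)]
      · linarith [far3 hqyu, sq_nonneg ((1-t)*a + t*px + 1)]
      · linarith [far4 hqxl, sq_nonneg ((1-t)*b + t*py + 1)]

/-- The kernel property: the planar region `Ppred` is star-shaped with respect to every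
point of the ball of radius `1/10` around the origin. -/
lemma Ppred_seg {a b px py t : ℝ} (hy : a^2 + b^2 ≤ (1/10)^2)
    (hp : Ppred px py) (ht0 : 0 ≤ t) (ht1 : t ≤ 1) :
    Ppred ((1-t)*a + t*px) ((1-t)*b + t*py) := by
  have ha1 : -(1/10) ≤ a := by nlinarith [sq_nonneg b]
  have ha2 : a ≤ 1/10 := by nlinarith [sq_nonneg b]
  have hb1 : -(1/10) ≤ b := by nlinarith [sq_nonneg a]
  have hb2 : b ≤ 1/10 := by nlinarith [sq_nonneg a]
  rcases hp with ⟨hx1, hy1, h11, h21, h31⟩ | ⟨hd, hm⟩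
  · exact PpredA_seg ha1 ha2 hb1 hb2 hx1 hy1 h11 h21 h31 ht0 ht1
  · exact PpredB_seg ha1 ha2 hb1 hb2 hd hm ht0 ht1

/-- The planar region in `EuclideanSpace ℝ (Fin 2)`. -/
def SE : Set (EuclideanSpace ℝ (Fin 2)) := {w | Ppred (w 0) (w 1)}

lemma SE_closed : IsClosed SE := by
  have h0 : Continuous fun w : EuclideanSpace ℝ (Fin 2) => w 0 := PiLp.continuous_apply 2 _ 0
  have h1 : Continuous fun w : EuclideanSpace ℝ (Fin 2) => w 1 := PiLp.continuous_apply 2 _ 1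
  have : SE = ({w : EuclideanSpace ℝ (Fin 2) | |w 0| ≤ 1} ∩ {w | |w 1| ≤ 1} ∩
      {w | (2/3)^2 ≤ (w 0-1)^2+(w 1-1)^2} ∩ {w | (2/3)^2 ≤ (w 0+1)^2+(w 1-1)^2} ∩
      {w | (2/3)^2 ≤ (w 0+1)^2+(w 1+1)^2}) ∪
      ({w | (w 0-1)^2+(w 1+1)^2 ≤ (4/3)^2} ∩ {w | 1 ≤ max |w 0| |w 1|}) := by
    ext w
    simp only [SE, Ppred, Set.mem_union, Set.mem_inter_iff, Set.mem_setOf_eq]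
    tauto
  rw [this]
  refine IsClosed.union (IsClosed.inter (IsClosed.inter (IsClosed.inter (IsClosed.inter
    ?_ ?_) ?_) ?_) ?_) (IsClosed.inter ?_ ?_)
  · exact isClosed_le (h0.abs) continuous_const
  · exact isClosed_le (h1.abs) continuous_const
  · exact isClosed_le continuous_const (by fun_prop)
  · exact isClosed_le continuous_const (by fun_prop)
  · exact isClosed_le continuous_const (by fun_prop)
  · exact isClosed_le (by fun_prop) continuous_const
  · exact isClosed_le continuous_const ((h0.abs).max (h1.abs))

lemma Ppred_bounds {x y : ℝ} (h : Ppred x y) :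
    x^2 ≤ (7/3)^2 ∧ y^2 ≤ (7/3)^2 := by
  rcases h with ⟨hx, hy, -, -, -⟩ | ⟨hd, -⟩
  · obtain ⟨h1, h2⟩ := abs_le.mp hx
    obtain ⟨h3, h4⟩ := abs_le.mp hy
    constructor <;> nlinarith
  · have hd' : (x-1)^2 + (y+1)^2 ≤ 16/9 := le_trans hd (by norm_num)
    have h1 : -(1/3) ≤ x := by nlinarith [sq_nonneg (x + 1/3), sq_nonneg (y+1)]
    have h2 : x ≤ 7/3 := by nlinarith [sq_nonneg (x - 7/3), sq_nonneg (y+1)]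
    have h3 : -(7/3) ≤ y := by nlinarith [sq_nonneg (y + 7/3), sq_nonneg (x-1)]
    have h4 : y ≤ 1/3 := by nlinarith [sq_nonneg (y - 1/3), sq_nonneg (x-1)]
    constructor <;> nlinarith

lemma SE_compact : IsCompact SE := by
  refine isCompact_of_isClosed_isBounded SE_closed ?_
  rw [Metric.isBounded_iff_subset_closedBall 0]
  refine ⟨4, fun w hw => ?_⟩
  obtain ⟨h1, h2⟩ := Ppred_bounds hw
  rw [Metric.mem_closedBall, dist_zero_right, EuclideanSpace.norm_eq]
  rw [Fin.sum_univ_two]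
  have hs : ‖w 0‖^2 + ‖w 1‖^2 ≤ 16 := by
    rw [Real.norm_eq_abs, Real.norm_eq_abs, sq_abs, sq_abs]; nlinarith
  calc Real.sqrt (‖w 0‖^2 + ‖w 1‖^2) ≤ Real.sqrt 16 := Real.sqrt_le_sqrt hs
    _ = 4 := by rw [show (16:ℝ) = 4^2 by norm_num, Real.sqrt_sq (by norm_num)]

lemma SE_nonempty : SE.Nonempty := by
  refine ⟨0, ?_⟩
  show Ppred ((0 : EuclideanSpace ℝ (Fin 2)) 0) ((0 : EuclideanSpace ℝ (Fin 2)) 1)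
  have : (0 : EuclideanSpace ℝ (Fin 2)) 0 = 0 := rfl
  have : (0 : EuclideanSpace ℝ (Fin 2)) 1 = 0 := rfl
  left
  norm_num [Ppred, show (0 : EuclideanSpace ℝ (Fin 2)) 0 = 0 from rfl,
    show (0 : EuclideanSpace ℝ (Fin 2)) 1 = 0 from rfl]

lemma SE_ker : ∀ x ∈ SE, ∀ y : EuclideanSpace ℝ (Fin 2), ‖y‖ ≤ (1/10 : ℝ) →
    segment ℝ y x ⊆ SE := by
  intro x hx y hy w hw
  obtain ⟨s, t, hs, ht, hst, rfl⟩ := hw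
  have hy2 : (y 0)^2 + (y 1)^2 ≤ (1/10)^2 := by
    have h0 : (0:ℝ) ≤ ∑ i, ‖y i‖^2 := Finset.sum_nonneg fun i _ => sq_nonneg _
    have hsq := Real.sq_sqrt h0
    rw [EuclideanSpace.norm_eq] at hy
    have h2 : (∑ i, ‖y i‖^2) ≤ (1/10)^2 := by nlinarith [Real.sqrt_nonneg (∑ i, ‖y i‖^2)]
    rw [Fin.sum_univ_two, Real.norm_eq_abs, Real.norm_eq_abs, sq_abs, sq_abs] at h2
    exact h2
  have hseq : s = 1 - t := by linarith
  subst hseq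
  have hc0 : ((1-t) • y + t • x) 0 = (1-t) * y 0 + t * x 0 := rfl
  have hc1 : ((1-t) • y + t • x) 1 = (1-t) * y 1 + t * x 1 := rfl
  show Ppred (((1-t) • y + t • x) 0) (((1-t) • y + t • x) 1)
  rw [hc0, hc1]
  exact Ppred_seg hy2 hx ht (by linarith)

/-- The identification of `MXY` with the planar region `SE`. -/
noncomputable def MXY_homeo_SE : MXY ≃ₜ (SE : Set (EuclideanSpace ℝ (Fin 2))) where
  toFun v := ⟨(WithLp.equiv 2 (Fin 2 → ℝ)).symm ![v.1.1, v.1.2.1], by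
    have h := (MXY_iff v.1).mp v.2
    show Ppred _ _
    simpa [WithLp.equiv_symm_apply, PiLp.toLp_apply] using h.2⟩
  invFun w := ⟨(w.1 0, w.1 1, 0), (MXY_iff _).mpr ⟨rfl, w.2⟩⟩
  left_inv v := by
    apply Subtype.ext
    obtain ⟨⟨x, y, z⟩, hv⟩ := v
    have hz : z = 0 := ((MXY_iff _).mp hv).1
    simp [WithLp.equiv_symm_apply, PiLp.toLp_apply, hz]
  right_inv w := by
    apply Subtype.ext
    ext i
    fin_cases i <;> simp [WithLp.equiv_symm_apply, PiLp.toLp_apply]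
  continuous_toFun := by
    apply Continuous.subtype_mk
    refine (PiLp.continuous_toLp 2 (fun _ : Fin 2 => ℝ)).comp ?_
    refine continuous_pi fun i => ?_
    fin_cases i
    · exact (continuous_fst.comp continuous_subtype_val)
    · exact ((continuous_fst.comp continuous_snd).comp continuous_subtype_val)
  continuous_invFun := by
    apply Continuous.subtype_mk
    exact ((PiLp.continuous_apply 2 _ 0).comp continuous_subtype_val).prodMk
      (((PiLp.continuous_apply 2 _ 1).comp continuous_subtype_val).prodMk continuous_const)


/-- `M_XY` is a topological rectangle: it is homeomorphic to the
closed unit disk in `ℝ²`. -/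
theorem MXY_homeomorph_disk :
    Nonempty (MXY ≃ₜ (Metric.closedBall (0 : EuclideanSpace ℝ (Fin 2)) 1)) := by
  obtain ⟨h⟩ := starbody_homeo SE_compact (by norm_num : (0:ℝ) < 1/10) SE_nonempty SE_ker
  exact ⟨MXY_homeo_SE.trans h⟩
end

section
/- The rectilinear region Ω = Ω_XY ∪ Ω_YZ ∪ Ω_ZX is a topological ball: Ω is homeomorphic to the closed unit ball of ℝ³. -/
/-- The slab `Ω_XY = [-1,7] × [-7,1] × [-1,1]`. -/
def ΩXY : Set (ℝ × ℝ × ℝ) :=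
  Set.Icc (-1 : ℝ) 7 ×ˢ (Set.Icc (-7 : ℝ) 1 ×ˢ Set.Icc (-1 : ℝ) 1)

/-- The slab `Ω_YZ = [-1,1] × [-1,7] × [-7,1]`. -/
def ΩYZ : Set (ℝ × ℝ × ℝ) :=
  Set.Icc (-1 : ℝ) 1 ×ˢ (Set.Icc (-1 : ℝ) 7 ×ˢ Set.Icc (-7 : ℝ) 1)

/-- The slab `Ω_ZX = [-7,1] × [-1,1] × [-1,7]`. -/
def ΩZX : Set (ℝ × ℝ × ℝ) :=
  Set.Icc (-7 : ℝ) 1 ×ˢ (Set.Icc (-1 : ℝ) 1 ×ˢ Set.Icc (-1 : ℝ) 7)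

/-- The rectilinear region `Ω = Ω_XY ∪ Ω_YZ ∪ Ω_ZX`. -/
def Ω : Set (ℝ × ℝ × ℝ) := ΩXY ∪ ΩYZ ∪ ΩZX

open Metric Set Filter Bornology
open scoped Topology Pointwise

namespace OmegaBall

abbrev E := ℝ × ℝ × ℝ

/-- The closed unit ball of the sup norm is the cube `[-1,1]³`. -/
lemma ball_eq_cube :
    Metric.closedBall (0 : E) 1 =
      Set.Icc (-1 : ℝ) 1 ×ˢ (Set.Icc (-1 : ℝ) 1 ×ˢ Set.Icc (-1 : ℝ) 1) := by
  have h0 : (0 : E) = ((0 : ℝ), ((0 : ℝ), (0 : ℝ))) := rfl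
  rw [h0, ← closedBall_prod_same, ← closedBall_prod_same]
  norm_num [Real.closedBall_eq_Icc]

lemma cube_subset_XY : Metric.closedBall (0 : E) 1 ⊆ ΩXY := by
  rw [ball_eq_cube]
  rintro ⟨x, y, z⟩ ⟨hx, hy, hz⟩
  exact ⟨⟨hx.1, hx.2.trans (by norm_num)⟩,
    ⟨(by norm_num : (-7:ℝ) ≤ -1).trans hy.1, hy.2⟩, hz⟩

lemma cube_subset_YZ : Metric.closedBall (0 : E) 1 ⊆ ΩYZ := by
  rw [ball_eq_cube]
  rintro ⟨x, y, z⟩ ⟨hx, hy, hz⟩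
  exact ⟨hx, ⟨hy.1, hy.2.trans (by norm_num)⟩,
    ⟨(by norm_num : (-7:ℝ) ≤ -1).trans hz.1, hz.2⟩⟩

lemma cube_subset_ZX : Metric.closedBall (0 : E) 1 ⊆ ΩZX := by
  rw [ball_eq_cube]
  rintro ⟨x, y, z⟩ ⟨hx, hy, hz⟩
  exact ⟨⟨(by norm_num : (-7:ℝ) ≤ -1).trans hx.1, hx.2⟩, hy,
    ⟨hz.1, hz.2.trans (by norm_num)⟩⟩

lemma convex_XY : Convex ℝ ΩXY :=
  (convex_Icc _ _).prod ((convex_Icc _ _).prod (convex_Icc _ _))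
lemma convex_YZ : Convex ℝ ΩYZ :=
  (convex_Icc _ _).prod ((convex_Icc _ _).prod (convex_Icc _ _))
lemma convex_ZX : Convex ℝ ΩZX :=
  (convex_Icc _ _).prod ((convex_Icc _ _).prod (convex_Icc _ _))

/-- `Ω` is star-shaped with respect to every point of the unit cube. -/
lemma star {b x : E} (hb : b ∈ Metric.closedBall (0 : E) 1) (hx : x ∈ Ω)
    {a c : ℝ} (ha : 0 ≤ a) (hc : 0 ≤ c) (hac : a + c = 1) :
    a • b + c • x ∈ Ω := by
  rcases hx with (hx | hx) | hx
  · exact Or.inl <| Or.inl <| convex_XY (cube_subset_XY hb) hx ha hc hac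
  · exact Or.inl <| Or.inr <| convex_YZ (cube_subset_YZ hb) hx ha hc hac
  · exact Or.inr <| convex_ZX (cube_subset_ZX hb) hx ha hc hac

lemma ball_subset : Metric.closedBall (0 : E) 1 ⊆ Ω := fun b hb =>
  Or.inl (Or.inl (cube_subset_XY hb))

lemma omega_mem_nhds : Ω ∈ 𝓝 (0 : E) :=
  Filter.mem_of_superset (Metric.closedBall_mem_nhds 0 one_pos) ball_subset

lemma omega_subset_ball : Ω ⊆ Metric.closedBall (0 : E) 7 := by
  rintro ⟨x, y, z⟩ hx
  simp only [Ω, ΩXY, ΩYZ, ΩZX, Set.mem_union, Set.mem_prod, Set.mem_Icc] at hx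
  have : |x| ≤ 7 ∧ |y| ≤ 7 ∧ |z| ≤ 7 := by
    rcases hx with (⟨h1, h2, h3⟩ | ⟨h1, h2, h3⟩) | ⟨h1, h2, h3⟩ <;>
      refine ⟨abs_le.2 ⟨?_, ?_⟩, abs_le.2 ⟨?_, ?_⟩, abs_le.2 ⟨?_, ?_⟩⟩ <;>
      first | linarith [h1.1, h1.2] | linarith [h2.1, h2.2] | linarith [h3.1, h3.2]
  rw [mem_closedBall_zero_iff, Prod.norm_def, Prod.norm_def]
  simp only [Real.norm_eq_abs]
  exact max_le this.1 (max_le this.2.1 this.2.2)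

lemma omega_isClosed : IsClosed Ω := by
  have h : ∀ (a b c d e f : ℝ),
      IsClosed (Set.Icc a b ×ˢ (Set.Icc c d ×ˢ Set.Icc e f)) := fun a b c d e f =>
    isClosed_Icc.prod (isClosed_Icc.prod isClosed_Icc)
  exact ((h _ _ _ _ _ _).union (h _ _ _ _ _ _)).union (h _ _ _ _ _ _)

lemma omega_bounded : IsVonNBounded ℝ Ω :=
  NormedSpace.isVonNBounded_of_isBounded _
    (Metric.isBounded_closedBall.subset omega_subset_ball)

lemma omega_absorbent : Absorbent ℝ Ω := absorbent_nhds_zero omega_mem_nhds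

/-- Subadditivity of the gauge of `Ω` against the norm. -/
lemma gauge_add_le' (x y : E) : gauge Ω (x + y) ≤ gauge Ω x + ‖y‖ := by
  refine le_of_forall_pos_le_add fun ε hε => ?_
  obtain ⟨b, hb0, hblt, hbx⟩ := exists_lt_of_gauge_lt omega_absorbent
    (lt_add_of_pos_right (gauge Ω x) (half_pos hε) : gauge Ω x < gauge Ω x + ε / 2)
  set u : ℝ := ‖y‖ + ε / 2 with hu
  have hu0 : 0 < u := by positivity
  obtain ⟨w, hw, hxw⟩ := hbx
  have hbu : 0 < b + u := by positivity
  have hmem : (u / (b + u)) • (u⁻¹ • y) + (b / (b + u)) • w ∈ Ω := by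
    refine star ?_ hw (div_nonneg hu0.le hbu.le) (div_nonneg hb0.le hbu.le) (by field_simp <;> ring)
    rw [mem_closedBall_zero_iff, norm_smul, norm_inv, Real.norm_eq_abs,
      abs_of_pos hu0]
    rw [inv_mul_le_iff₀ hu0, mul_one, hu]
    linarith [half_pos hε]
  have hxy : x + y ∈ (b + u) • Ω := by
    refine ⟨_, hmem, ?_⟩
    show (b + u) • ((u / (b + u)) • (u⁻¹ • y) + (b / (b + u)) • w) = x + y
    rw [← hxw]
    rw [smul_add, smul_smul, smul_smul, smul_smul]
    rw [show (b + u) * (u / (b + u)) * u⁻¹ = 1 by field_simp,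
      show (b + u) * (b / (b + u)) = b by field_simp]
    rw [one_smul]
    abel
  calc gauge Ω (x + y) ≤ b + u := gauge_le_of_mem hbu.le hxy
    _ ≤ gauge Ω x + ‖y‖ + ε := by rw [hu]; linarith

lemma lipschitz_gauge_omega : LipschitzWith 1 (gauge Ω) := by
  refine LipschitzWith.of_le_add fun x y => ?_
  have := gauge_add_le' y (x - y)
  simpa [dist_eq_norm] using this

lemma continuous_gauge_omega : Continuous (gauge Ω) :=
  lipschitz_gauge_omega.continuous

/-- If `gauge Ω z ≤ 1` then `z ∈ Ω`. -/
lemma mem_of_gauge_le_one {z : E} (hz : gauge Ω z ≤ 1) : z ∈ Ω := by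
  have key : ∀ n : ℕ, (1 + (n + 1 : ℝ)⁻¹)⁻¹ • z ∈ Ω := by
    intro n
    have hpos : (0 : ℝ) < (n + 1 : ℝ)⁻¹ := by positivity
    have hc1 : (1 : ℝ) < 1 + (n + 1 : ℝ)⁻¹ := by linarith
    obtain ⟨b, hb0, hblt, w, hw, hzw⟩ := exists_lt_of_gauge_lt omega_absorbent
      (lt_of_le_of_lt hz hc1)
    have hc0 : (0 : ℝ) < 1 + (n + 1 : ℝ)⁻¹ := by positivity
    have heq : (1 + (n + 1 : ℝ)⁻¹)⁻¹ • z
        = (1 - b / (1 + (n + 1 : ℝ)⁻¹)) • (0 : E) + (b / (1 + (n + 1 : ℝ)⁻¹)) • w := by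
      rw [smul_zero, zero_add, ← hzw, smul_smul]
      congr 1
      field_simp <;> ring
    rw [heq]
    have hle : b / (1 + (n + 1 : ℝ)⁻¹) ≤ 1 := by
      rw [div_le_one hc0]; linarith
    exact star (by simp) hw (by linarith) (by positivity) (by ring)
  have htend : Tendsto (fun n : ℕ => (1 + (n + 1 : ℝ)⁻¹)⁻¹ • z) atTop (𝓝 z) := by
    have h0 : Tendsto (fun n : ℕ => ((n : ℝ) + 1)⁻¹) atTop (𝓝 0) := by
      simpa [one_div] using tendsto_one_div_add_atTop_nhds_zero_nat (𝕜 := ℝ)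
    have h1 : Tendsto (fun n : ℕ => (1 + (n + 1 : ℝ)⁻¹)) atTop (𝓝 1) := by
      simpa using
        ((tendsto_const_nhds : Tendsto (fun _ : ℕ => (1:ℝ)) atTop (𝓝 1)).add h0)
    have h2 : Tendsto (fun n : ℕ => (1 + (n + 1 : ℝ)⁻¹)⁻¹) atTop (𝓝 1) := by
      simpa using h1.inv₀ one_ne_zero
    simpa using
      h2.smul (tendsto_const_nhds : Tendsto (fun _ : ℕ => z) atTop (𝓝 z))
  exact omega_isClosed.mem_of_tendsto htend (Filter.Eventually.of_forall key)

lemma cube_nhds : Metric.closedBall (0 : E) 1 ∈ 𝓝 (0 : E) :=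
  Metric.closedBall_mem_nhds 0 one_pos

lemma cube_bounded : IsVonNBounded ℝ (Metric.closedBall (0 : E) 1) :=
  NormedSpace.isVonNBounded_closedBall ℝ E 1

lemma continuous_gauge_cube : Continuous (gauge (Metric.closedBall (0 : E) 1)) :=
  continuous_gauge (convex_closedBall 0 1) cube_nhds

/-- Continuity of `gaugeRescale s t` given continuity of both gauges. -/
lemma continuous_rescale {s t : Set E} (hs : Continuous (gauge s)) (hs₀ : s ∈ 𝓝 0)
    (ht : Continuous (gauge t)) (ht₀ : t ∈ 𝓝 0) (htb : IsVonNBounded ℝ t) :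
    Continuous (gaugeRescale s t) := by
  have hta : Absorbent ℝ t := absorbent_nhds_zero ht₀
  refine continuous_iff_continuousAt.2 fun x ↦ ?_
  rcases eq_or_ne x 0 with rfl | hx
  · rw [ContinuousAt, gaugeRescale_zero]
    nth_rewrite 2 [← comap_gauge_nhds_zero htb ht₀]
    simp only [tendsto_comap_iff, Function.comp_def, gauge_gaugeRescale _ hta htb]
    exact tendsto_gauge_nhds_zero hs₀
  · exact (hs.continuousAt.div ht.continuousAt
      ((gauge_pos hta htb).2 hx).ne').smul continuousAt_id

/-- The gauge-rescale homeomorphism of `ℝ × ℝ × ℝ` sending `Ω` onto the sup-norm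
closed unit ball. -/
noncomputable def omegaHomeo : E ≃ₜ E where
  toEquiv := gaugeRescaleEquiv Ω (Metric.closedBall 0 1) omega_absorbent omega_bounded
    (absorbent_nhds_zero cube_nhds) cube_bounded
  continuous_toFun := continuous_rescale continuous_gauge_omega omega_mem_nhds
    continuous_gauge_cube cube_nhds cube_bounded
  continuous_invFun := continuous_rescale continuous_gauge_cube cube_nhds
    continuous_gauge_omega omega_mem_nhds omega_bounded

lemma omegaHomeo_image : omegaHomeo '' Ω = Metric.closedBall (0 : E) 1 := by
  apply Set.Subset.antisymm
  · rintro _ ⟨x, hx, rfl⟩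
    show gaugeRescale Ω (Metric.closedBall 0 1) x ∈ Metric.closedBall (0 : E) 1
    rw [mem_closedBall_zero_iff]
    have h1 : gauge (Metric.closedBall (0 : E) 1)
        (gaugeRescale Ω (Metric.closedBall 0 1) x) = gauge Ω x :=
      gauge_gaugeRescale _ (absorbent_nhds_zero cube_nhds) cube_bounded x
    rw [gauge_closedBall zero_le_one, div_one] at h1
    rw [h1]
    exact gauge_le_one_of_mem hx
  · intro y hy
    refine ⟨gaugeRescale (Metric.closedBall 0 1) Ω y, ?_, omegaHomeo.toEquiv.right_inv y⟩
    apply mem_of_gauge_le_one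
    have h1 : gauge Ω (gaugeRescale (Metric.closedBall 0 1) Ω y)
        = gauge (Metric.closedBall (0 : E) 1) y :=
      gauge_gaugeRescale _ omega_absorbent omega_bounded y
    rw [h1, gauge_closedBall zero_le_one, div_one]
    exact mem_closedBall_zero_iff.1 hy

end OmegaBall

open Metric Set Bornology OmegaBall

/-- `Ω` is a topological ball: it is homeomorphic to the closed
unit ball of `ℝ³`. -/
theorem Omega_homeomorph_ball :
    Nonempty (Ω ≃ₜ (Metric.closedBall (0 : EuclideanSpace ℝ (Fin 3)) 1)) := by
  have hfr : Module.finrank ℝ OmegaBall.E = Module.finrank ℝ (EuclideanSpace ℝ (Fin 3)) := by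
    simp [Module.finrank_prod, Module.finrank_self, finrank_euclideanSpace_fin]
  let φ : OmegaBall.E ≃L[ℝ] EuclideanSpace ℝ (Fin 3) := ContinuousLinearEquiv.ofFinrankEq hfr
  set K : Set (EuclideanSpace ℝ (Fin 3)) := ⇑φ.toHomeomorph '' Metric.closedBall (0 : OmegaBall.E) 1
    with hK
  have hKconv : Convex ℝ K := (convex_closedBall _ _).linear_image φ.toLinearEquiv.toLinearMap
  have hKcompact : IsCompact K := (isCompact_closedBall _ _).image φ.continuous
  have hKb : IsVonNBounded ℝ K :=
    NormedSpace.isVonNBounded_of_isBounded _ hKcompact.isBounded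
  have hKint : (interior K).Nonempty := by
    have hsub : ⇑φ.toHomeomorph '' Metric.ball (0 : OmegaBall.E) 1 ⊆ interior K :=
      interior_maximal (Set.image_mono Metric.ball_subset_closedBall)
        (φ.toHomeomorph.isOpenMap _ Metric.isOpen_ball)
    exact ⟨_, hsub ⟨0, Metric.mem_ball_self one_pos, rfl⟩⟩
  obtain ⟨e, -, he, -⟩ := exists_homeomorph_image_eq hKconv hKint hKb
    (convex_closedBall (0 : EuclideanSpace ℝ (Fin 3)) 1)
    (by
      rw [interior_closedBall _ one_ne_zero]
      exact ⟨0, Metric.mem_ball_self one_pos⟩)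
    (NormedSpace.isVonNBounded_closedBall ℝ _ 1)
  rw [hKcompact.isClosed.closure_eq, Metric.isClosed_closedBall.closure_eq] at he
  exact ⟨(((omegaHomeo.image Ω).trans (Homeomorph.setCongr omegaHomeo_image)).trans
    (φ.toHomeomorph.image _)).trans ((e.image K).trans (Homeomorph.setCongr he))⟩
end

section
/- The complement of Ω in the 3-sphere is also a topological ball: in the one-point compactification ℝ³ ∪ {∞}, the set ((ℝ³ ∪ {∞}) \ interior(Ω)) is homeomorphic to the closed unit ball of ℝ³, where interior(Ω) is the topological interior of Ω in ℝ³. -/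
/-- The complement of the interior of `Ω` in the one-point compactification
`S³ = ℝ³ ∪ {∞}`. -/
def OmegaComplement : Set (OnePoint (ℝ × ℝ × ℝ)) :=
  ((fun v : ℝ × ℝ × ℝ => (v : OnePoint (ℝ × ℝ × ℝ))) '' interior Ω)ᶜ

noncomputable section

/-- Gauge of the interval `[-lo, hi]`. -/
def gI (lo hi x : ℝ) : ℝ := max (x / hi) (-x / lo)

/-- Gauge of a box. -/
def gB (l1 h1 l2 h2 l3 h3 : ℝ) (v : ℝ × ℝ × ℝ) : ℝ :=
  max (gI l1 h1 v.1) (max (gI l2 h2 v.2.1) (gI l3 h3 v.2.2))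

/-- Gauge of Ω. -/
def gΩ (v : ℝ × ℝ × ℝ) : ℝ :=
  min (gB 1 7 7 1 1 1 v) (min (gB 1 1 1 7 7 1 v) (gB 7 1 1 1 1 7 v))

lemma gI_le_one {lo hi : ℝ} (hlo : 0 < lo) (hhi : 0 < hi) (x : ℝ) :
    gI lo hi x ≤ 1 ↔ x ∈ Set.Icc (-lo) hi := by
  rw [gI, max_le_iff, div_le_one hhi, div_le_one hlo, Set.mem_Icc]
  constructor
  · rintro ⟨h1, h2⟩; exact ⟨by linarith, h1⟩
  · rintro ⟨h1, h2⟩; exact ⟨h2, by linarith⟩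

lemma continuous_gI (lo hi : ℝ) : Continuous fun x : ℝ => gI lo hi x := by
  unfold gI; fun_prop

lemma continuous_gΩ : Continuous gΩ := by
  unfold gΩ gB
  refine Continuous.min ?_ (Continuous.min ?_ ?_) <;>
  · refine Continuous.max ?_ (Continuous.max ?_ ?_) <;>
    exact (continuous_gI _ _).comp (by fun_prop)

lemma gI_smul (lo hi : ℝ) {t : ℝ} (ht : 0 ≤ t) (x : ℝ) :
    gI lo hi (t * x) = t * gI lo hi x := by
  rw [gI, gI, mul_max_of_nonneg _ _ ht, mul_div_assoc]
  congr 1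
  field_simp

lemma gΩ_smul {t : ℝ} (ht : 0 ≤ t) (v : ℝ × ℝ × ℝ) : gΩ (t • v) = t * gΩ v := by
  have h : ∀ l1 h1 l2 h2 l3 h3, gB l1 h1 l2 h2 l3 h3 (t • v)
      = t * gB l1 h1 l2 h2 l3 h3 v := by
    intro l1 h1 l2 h2 l3 h3
    rw [gB, gB]
    have e1 : (t • v).1 = t * v.1 := rfl
    have e2 : (t • v).2.1 = t * v.2.1 := rfl
    have e3 : (t • v).2.2 = t * v.2.2 := rfl
    rw [e1, e2, e3, gI_smul _ _ ht, gI_smul _ _ ht, gI_smul _ _ ht,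
      mul_max_of_nonneg _ _ ht, mul_max_of_nonneg _ _ ht]
  rw [gΩ, gΩ, h, h, h, mul_min_of_nonneg _ _ ht, mul_min_of_nonneg _ _ ht]

lemma gΩ_zero : gΩ 0 = 0 := by
  simp [gΩ, gB, gI]

lemma gI_lb {lo hi : ℝ} (hlo : 0 < lo) (hlo7 : lo ≤ 7) (hhi : 0 < hi) (hhi7 : hi ≤ 7)
    (x : ℝ) : |x| / 7 ≤ gI lo hi x := by
  rcases le_total 0 x with hx | hx
  · rw [abs_of_nonneg hx]
    exact le_max_of_le_left (div_le_div_of_nonneg_left hx hhi hhi7)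
  · rw [abs_of_nonpos hx]
    exact le_max_of_le_right (div_le_div_of_nonneg_left (by linarith) hlo hlo7)

lemma gΩ_lb (v : ℝ × ℝ × ℝ) : ‖v‖ / 7 ≤ gΩ v := by
  have hn : ‖v‖ = max |v.1| (max |v.2.1| |v.2.2|) := by
    rw [Prod.norm_def, Prod.norm_def, Real.norm_eq_abs, Real.norm_eq_abs, Real.norm_eq_abs]
  have key : ∀ l1 h1 l2 h2 l3 h3 : ℝ, 0 < l1 → l1 ≤ 7 → 0 < h1 → h1 ≤ 7 →
      0 < l2 → l2 ≤ 7 → 0 < h2 → h2 ≤ 7 → 0 < l3 → l3 ≤ 7 → 0 < h3 → h3 ≤ 7 →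
      ‖v‖ / 7 ≤ gB l1 h1 l2 h2 l3 h3 v := by
    intro l1 h1 l2 h2 l3 h3 a1 a2 a3 a4 a5 a6 a7 a8 a9 a10 a11 a12
    rw [hn, gB]
    have b1 := gI_lb a1 a2 a3 a4 v.1
    have b2 := gI_lb a5 a6 a7 a8 v.2.1
    have b3 := gI_lb a9 a10 a11 a12 v.2.2
    rcases max_cases |v.1| (max |v.2.1| |v.2.2|) with ⟨he, _⟩ | ⟨he, _⟩
    · rw [he]; exact le_max_of_le_left b1
    · rw [he]
      rcases max_cases |v.2.1| |v.2.2| with ⟨he2, _⟩ | ⟨he2, _⟩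
      · rw [he2]; exact le_max_of_le_right (le_max_of_le_left b2)
      · rw [he2]; exact le_max_of_le_right (le_max_of_le_right b3)
  rw [gΩ]
  refine le_min (key _ _ _ _ _ _ ?_ ?_ ?_ ?_ ?_ ?_ ?_ ?_ ?_ ?_ ?_ ?_)
    (le_min (key _ _ _ _ _ _ ?_ ?_ ?_ ?_ ?_ ?_ ?_ ?_ ?_ ?_ ?_ ?_)
      (key _ _ _ _ _ _ ?_ ?_ ?_ ?_ ?_ ?_ ?_ ?_ ?_ ?_ ?_ ?_)) <;> norm_num
lemma mem_Omega_iff (v : ℝ × ℝ × ℝ) : v ∈ Ω ↔ gΩ v ≤ 1 := by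
  have hb : ∀ (l1 h1 l2 h2 l3 h3 : ℝ), 0 < l1 → 0 < h1 → 0 < l2 → 0 < h2 → 0 < l3 → 0 < h3 →
      (gB l1 h1 l2 h2 l3 h3 v ≤ 1 ↔
        v ∈ Set.Icc (-l1) h1 ×ˢ (Set.Icc (-l2) h2 ×ˢ Set.Icc (-l3) h3)) := by
    intro l1 h1 l2 h2 l3 h3 a1 a2 a3 a4 a5 a6
    rw [gB, max_le_iff, max_le_iff, gI_le_one a1 a2, gI_le_one a3 a4, gI_le_one a5 a6,
      Set.mem_prod, Set.mem_prod]
  have h1 := hb 1 7 7 1 1 1 (by norm_num) (by norm_num) (by norm_num) (by norm_num)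
    (by norm_num) (by norm_num)
  have h2 := hb 1 1 1 7 7 1 (by norm_num) (by norm_num) (by norm_num) (by norm_num)
    (by norm_num) (by norm_num)
  have h3 := hb 7 1 1 1 1 7 (by norm_num) (by norm_num) (by norm_num) (by norm_num)
    (by norm_num) (by norm_num)
  rw [gΩ, min_le_iff, min_le_iff, h1, h2, h3]
  simp only [Ω, ΩXY, ΩYZ, ΩZX, Set.mem_union]
  tauto

lemma interior_Omega : interior Ω = {v | gΩ v < 1} := by
  apply Set.Subset.antisymm
  · intro v hv
    have hvΩ : gΩ v ≤ 1 := (mem_Omega_iff v).mp (interior_subset hv)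
    obtain ⟨ε, hε, hball⟩ := Metric.isOpen_iff.mp isOpen_interior v hv
    set δ : ℝ := ε / (2 * (‖v‖ + 1)) with hδdef
    have hnv : (0:ℝ) ≤ ‖v‖ := norm_nonneg v
    have hδ : 0 < δ := by positivity
    have hmem : (1 + δ) • v ∈ Ω := by
      apply interior_subset; apply hball
      rw [Metric.mem_ball, dist_eq_norm]
      have : (1 + δ) • v - v = δ • v := by
        rw [add_smul, one_smul]; abel
      rw [this, norm_smul, Real.norm_eq_abs, abs_of_pos hδ]
      have hkey : δ * (‖v‖ + 1) = ε / 2 := by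
        rw [hδdef]; field_simp
      nlinarith
    have hg : (1 + δ) * gΩ v ≤ 1 := by
      rw [← gΩ_smul (by linarith)]
      exact (mem_Omega_iff _).mp hmem
    have hg0 : 0 ≤ gΩ v := le_trans (by positivity) (gΩ_lb v)
    by_contra hlt
    simp only [Set.mem_setOf_eq, not_lt] at hlt
    nlinarith
  · refine interior_maximal ?_ (isOpen_lt continuous_gΩ continuous_const)
    intro v hv
    exact (mem_Omega_iff v).mpr (le_of_lt hv)

lemma mem_OC_coe (v : ℝ × ℝ × ℝ) :
    (↑v : OnePoint (ℝ × ℝ × ℝ)) ∈ OmegaComplement ↔ 1 ≤ gΩ v := by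
  rw [OmegaComplement, Set.mem_compl_iff]
  constructor
  · intro h
    by_contra hlt
    push_neg at hlt
    exact h ⟨v, by rw [interior_Omega]; exact hlt, rfl⟩
  · rintro h ⟨w, hw, hwe⟩
    have : w = v := OnePoint.coe_injective hwe
    subst this
    rw [interior_Omega] at hw
    exact absurd h (not_le.mpr hw)

lemma infty_mem_OC : (OnePoint.infty : OnePoint (ℝ × ℝ × ℝ)) ∈ OmegaComplement := by
  rw [OmegaComplement, Set.mem_compl_iff]
  rintro ⟨w, _, hwe⟩
  exact (OnePoint.coe_ne_infty w) hwe
def Lequiv : (ℝ × ℝ × ℝ) ≃ₗ[ℝ] EuclideanSpace ℝ (Fin 3) where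
  toFun v := WithLp.toLp 2 ![v.1, v.2.1, v.2.2]
  invFun w := (w 0, w 1, w 2)
  map_add' a b := by
    ext i; fin_cases i <;> rfl
  map_smul' t a := by
    ext i; fin_cases i <;> rfl
  left_inv v := rfl
  right_inv w := by
    ext i; fin_cases i <;> rfl

def L : (ℝ × ℝ × ℝ) ≃L[ℝ] EuclideanSpace ℝ (Fin 3) :=
  Lequiv.toContinuousLinearEquiv

def Ffun : OnePoint (ℝ × ℝ × ℝ) → EuclideanSpace ℝ (Fin 3) :=
  fun p => Option.elim p 0 (fun v => (1 / (‖L v‖ * gΩ v)) • (L v : EuclideanSpace ℝ (Fin 3)))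

lemma Ffun_infty : Ffun OnePoint.infty = 0 := rfl

lemma Ffun_coe (v : ℝ × ℝ × ℝ) : Ffun ↑v = (1 / (‖L v‖ * gΩ v)) • (L v : EuclideanSpace ℝ (Fin 3)) := rfl
lemma gΩ_pos {v : ℝ × ℝ × ℝ} (hv : v ≠ 0) : 0 < gΩ v := by
  have h1 : 0 < ‖v‖ := norm_pos_iff.mpr hv
  have := gΩ_lb v
  linarith

lemma Lv_ne {v : ℝ × ℝ × ℝ} (hv : v ≠ 0) : (L v : EuclideanSpace ℝ (Fin 3)) ≠ 0 := by
  simpa using hv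

lemma norm_Ffun {v : ℝ × ℝ × ℝ} (hv : v ≠ 0) : ‖Ffun ↑v‖ = 1 / gΩ v := by
  have h1 : 0 < ‖(L v : EuclideanSpace ℝ (Fin 3))‖ := norm_pos_iff.mpr (Lv_ne hv)
  have h2 : 0 < gΩ v := gΩ_pos hv
  rw [Ffun_coe, norm_smul, Real.norm_eq_abs, abs_of_pos (by positivity)]
  field_simp

lemma ne_zero_of_mem_OC {v : ℝ × ℝ × ℝ} (hv : (↑v : OnePoint (ℝ × ℝ × ℝ)) ∈ OmegaComplement) :
    v ≠ 0 := by
  intro h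
  subst h
  have := (mem_OC_coe 0).mp hv
  rw [gΩ_zero] at this
  linarith

def Fres : OmegaComplement → (Metric.closedBall (0 : EuclideanSpace ℝ (Fin 3)) 1) :=
  fun p => ⟨Ffun p.1, by
    obtain ⟨q, hq⟩ := p
    rw [Metric.mem_closedBall, dist_zero_right]
    cases q with
    | infty => simp [Ffun_infty]
    | coe v =>
      have hg : 1 ≤ gΩ v := (mem_OC_coe v).mp hq
      have hv : v ≠ 0 := ne_zero_of_mem_OC hq
      rw [norm_Ffun hv, div_le_one (by linarith)]
      linarith⟩

lemma Fres_injective : Function.Injective Fres := by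
  rintro ⟨p, hp⟩ ⟨q, hq⟩ h
  simp only [Fres, Subtype.mk_eq_mk] at h
  ext1
  cases p with
  | infty =>
    cases q with
    | infty => rfl
    | coe v =>
      exfalso
      have hv : v ≠ 0 := ne_zero_of_mem_OC hq
      have hg : 1 ≤ gΩ v := (mem_OC_coe v).mp hq
      have : ‖Ffun (↑v : OnePoint (ℝ × ℝ × ℝ))‖ = 1 / gΩ v := norm_Ffun hv
      rw [← h, Ffun_infty, norm_zero] at this
      rw [eq_comm, div_eq_iff (by linarith : gΩ v ≠ 0)] at this
      simp at this
  | coe v =>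
    cases q with
    | infty =>
      exfalso
      have hv : v ≠ 0 := ne_zero_of_mem_OC hp
      have hg : 1 ≤ gΩ v := (mem_OC_coe v).mp hp
      have h2 : ‖Ffun (↑v : OnePoint (ℝ × ℝ × ℝ))‖ = 1 / gΩ v := norm_Ffun hv
      rw [h, Ffun_infty, norm_zero] at h2
      have hgpos : 0 < gΩ v := by linarith
      rw [eq_comm, div_eq_iff (by linarith)] at h2
      simp at h2
    | coe w =>
      have hv : v ≠ 0 := ne_zero_of_mem_OC hp
      have hw : w ≠ 0 := ne_zero_of_mem_OC hq
      have hgv : 1 ≤ gΩ v := (mem_OC_coe v).mp hp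
      have hgw : 1 ≤ gΩ w := (mem_OC_coe w).mp hq
      have hnorm : 1 / gΩ v = 1 / gΩ w := by
        rw [← norm_Ffun hv, ← norm_Ffun hw, h]
      have hgeq : gΩ v = gΩ w := by
        field_simp at hnorm
        linarith
      have hnv : 0 < ‖(L v : EuclideanSpace ℝ (Fin 3))‖ := norm_pos_iff.mpr (Lv_ne hv)
      have hnw : 0 < ‖(L w : EuclideanSpace ℝ (Fin 3))‖ := norm_pos_iff.mpr (Lv_ne hw)
      have hgv0 : 0 < gΩ v := by linarith
      set t : ℝ := ‖(L w : EuclideanSpace ℝ (Fin 3))‖ / ‖(L v : EuclideanSpace ℝ (Fin 3))‖ with htdef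
      have ht : 0 < t := by positivity
      have hLw : (L w : EuclideanSpace ℝ (Fin 3)) = t • (L v) := by
        rw [Ffun_coe, Ffun_coe] at h
        have h' := congrArg (fun z => (‖(L w : EuclideanSpace ℝ (Fin 3))‖ * gΩ w) • z) h
        simp only [smul_smul] at h'
        rw [mul_one_div_cancel (by positivity), one_smul] at h'
        rw [← h']
        congr 1
        rw [htdef, hgeq]
        field_simp
      have hweq : w = t • v := by
        have := congrArg L.symm hLw
        rw [L.symm_apply_apply] at this
        rw [this, map_smul, L.symm_apply_apply]
      have hgt : gΩ w = t * gΩ v := by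
        rw [hweq, gΩ_smul (le_of_lt ht)]
      have ht1 : t = 1 := by
        rw [hgeq] at hgt
        have : gΩ w * (t - 1) = 0 := by linarith [hgt]
        rcases mul_eq_zero.mp this with h0 | h0
        · exfalso; linarith
        · linarith
      show ((↑v : OnePoint (ℝ × ℝ × ℝ))) = ↑w
      have hvw : v = w := by rw [hweq, ht1, one_smul]
      exact congrArg _ hvw

lemma Fres_surjective : Function.Surjective Fres := by
  rintro ⟨w, hw⟩
  rw [Metric.mem_closedBall, dist_zero_right] at hw
  rcases eq_or_ne w 0 with rfl | hw0
  · exact ⟨⟨OnePoint.infty, infty_mem_OC⟩, Subtype.ext Ffun_infty⟩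
  · have hnw : 0 < ‖w‖ := norm_pos_iff.mpr hw0
    set u : ℝ × ℝ × ℝ := L.symm w with hudef
    have hu : u ≠ 0 := by
      simp only [hudef]
      intro hcon
      apply hw0
      have := congrArg L hcon
      rw [L.apply_symm_apply] at this
      simpa using this
    have hgu : 0 < gΩ u := gΩ_pos hu
    set t : ℝ := 1 / (‖w‖ * gΩ u) with htdef
    have ht : 0 < t := by positivity
    set v : ℝ × ℝ × ℝ := t • u with hvdef
    have hLv : (L v : EuclideanSpace ℝ (Fin 3)) = t • w := by
      rw [hvdef, map_smul, hudef, L.apply_symm_apply]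
    have hgv : gΩ v = 1 / ‖w‖ := by
      rw [hvdef, gΩ_smul (le_of_lt ht), htdef]
      field_simp
    have hmem : (↑v : OnePoint (ℝ × ℝ × ℝ)) ∈ OmegaComplement := by
      rw [mem_OC_coe, hgv, le_div_iff₀ hnw]
      linarith
    refine ⟨⟨↑v, hmem⟩, Subtype.ext ?_⟩
    show Ffun ↑v = w
    rw [Ffun_coe, hLv, hgv, norm_smul, Real.norm_eq_abs, abs_of_pos ht, smul_smul]
    have : 1 / (t * ‖w‖ * (1 / ‖w‖)) * t = 1 := by
      field_simp
    rw [this, one_smul]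

lemma Fres_continuous : Continuous Fres := by
  apply Continuous.subtype_mk
  have hco : ContinuousOn Ffun OmegaComplement := by
    intro p hp
    cases p with
    | infty =>
      apply ContinuousAt.continuousWithinAt
      rw [OnePoint.continuousAt_infty', Filter.coclosedCompact_eq_cocompact, Ffun_infty]
      have hbound : ∀ᶠ v : ℝ × ℝ × ℝ in Filter.cocompact _,
          ‖(Ffun ∘ (↑)) v‖ ≤ 7 / ‖v‖ := by
        filter_upwards [tendsto_norm_cocompact_atTop.eventually_ge_atTop 1] with v hv
        have hv0 : v ≠ 0 := by
          intro h; rw [h, norm_zero] at hv; linarith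
        have hnv : 0 < ‖v‖ := by linarith
        show ‖Ffun ↑v‖ ≤ 7 / ‖v‖
        rw [norm_Ffun hv0]
        rw [show (7:ℝ) / ‖v‖ = 1 / (‖v‖ / 7) by field_simp]
        apply one_div_le_one_div_of_le (by positivity) (gΩ_lb v)
      apply squeeze_zero_norm' hbound
      have h1 : Filter.Tendsto (fun v : ℝ × ℝ × ℝ => ‖v‖⁻¹) (Filter.cocompact _) (nhds 0) :=
        tendsto_inv_atTop_zero.comp tendsto_norm_cocompact_atTop
      have h2 := h1.const_mul (7:ℝ)
      simpa [div_eq_mul_inv] using h2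
    | coe v =>
      apply ContinuousAt.continuousWithinAt
      rw [OnePoint.continuousAt_coe]
      have hv : v ≠ 0 := ne_zero_of_mem_OC hp
      have hg : 1 ≤ gΩ v := (mem_OC_coe v).mp hp
      have hne : ‖(L v : EuclideanSpace ℝ (Fin 3))‖ * gΩ v ≠ 0 := by
        have := norm_pos_iff.mpr (Lv_ne hv)
        positivity
      have : (Ffun ∘ (↑) : (ℝ × ℝ × ℝ) → EuclideanSpace ℝ (Fin 3))
          = fun v => (1 / (‖L v‖ * gΩ v)) • (L v : EuclideanSpace ℝ (Fin 3)) := rfl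
      rw [this]
      apply ContinuousAt.smul (f := fun v => 1 / (‖L v‖ * gΩ v)) (g := fun v => (L v : EuclideanSpace ℝ (Fin 3)))
      · exact ContinuousAt.div continuousAt_const
          ((L.continuous.norm.continuousAt).mul continuous_gΩ.continuousAt) hne
      · exact L.continuous.continuousAt
  exact hco.restrict

/-- the complement of `Ω` in the 3-sphere is also a topological
ball: `(ℝ³ ∪ {∞}) \ interior Ω` is homeomorphic to the closed unit ball of
`ℝ³`. -/
theorem Omega_complement_homeomorph_ball :
    Nonempty (OmegaComplement ≃ₜ
      (Metric.closedBall (0 : EuclideanSpace ℝ (Fin 3)) 1)) := by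
  have hclosed : IsClosed OmegaComplement := by
    rw [OmegaComplement, isClosed_compl_iff]
    exact OnePoint.isOpenEmbedding_coe.isOpenMap _ isOpen_interior
  haveI : CompactSpace OmegaComplement := isCompact_iff_compactSpace.mp hclosed.isCompact
  exact ⟨Continuous.homeoOfEquivCompactToT2
    (f := Equiv.ofBijective Fres ⟨Fres_injective, Fres_surjective⟩) Fres_continuous⟩

end
end
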